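/- Using the bound S(ℓ,k) ≤ (ℓ·k)^ℓ on sunflower numbers and the fact that every ℓ-uniform k-sunflower is a (p, exp(-k·p^{binom(ℓ,2)}))-robust clique sunflower, one obtains RCB(ℓ, p, ε) ≤ (ℓ · ⌈log(1/ε)·p^{-binom(ℓ,2)}⌉)^ℓ ≤ (1/p)^{ℓ³}·(ℓ·(1+log(1/ε)))^ℓ. -/

import Mathlib

open MeasureTheory ENNReal

/-- The random-subset measure on `U → Bool` in which each coordinate is `true`
independently with probability `p`. -/
noncomputable def randFun (U : Type*) [Fintype U] [DecidableEq U] (p : ℝ) :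
    Measure (U → Bool) :=
  ∑ f : U → Bool,
    (∏ u : U, if f u then ENNReal.ofReal p else ENNReal.ofReal (1 - p)) • Measure.dirac f

/-- The core (common intersection) of a family of sets. -/
def core {U : Type*} [Fintype U] [DecidableEq U] (𝒮 : Finset (Finset U)) : Finset U := 𝒮.inf id

/-- `𝒮` is a `(q, ε)`-robust sunflower: sampling each element of `U` independently with
probability `q`, with probability at least `1 - ε` some `S ∈ 𝒮` satisfies `S ⊆ W ∪ C`,
where `C` is the core of `𝒮`. -/
def IsRobustSunflower {U : Type*} [Fintype U] [DecidableEq U]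
    (𝒮 : Finset (Finset U)) (q ε : ℝ) : Prop :=
  ENNReal.ofReal (1 - ε) ≤
    randFun U q {W | ∃ S ∈ 𝒮, ∀ x ∈ S, x ∈ core 𝒮 ∨ W x = true}

/-- The edge set `K_S` of the complete graph on the vertex set `S`. -/
def cliqueEdges {n : ℕ} (S : Finset (Fin n)) : Finset (Sym2 (Fin n)) :=
  ((S ×ˢ S).filter fun q => q.1 ≠ q.2).image fun q => s(q.1, q.2)

/-- `𝒮` is a `(p, ε)`-robust clique sunflower: for `G ~ G(n,p)`, with probability at
least `1 - ε` some `S ∈ 𝒮` satisfies `K_S ⊆ G ∪ K_C`, where `C` is the core of `𝒮`. -/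
def IsRobustCliqueSunflower {n : ℕ} (𝒮 : Finset (Finset (Fin n))) (p ε : ℝ) : Prop :=
  ENNReal.ofReal (1 - ε) ≤
    randFun (Sym2 (Fin n)) p
      {G | ∃ S ∈ 𝒮, ∀ e ∈ cliqueEdges S, e ∈ cliqueEdges (core 𝒮) ∨ G e = true}

/-- `N` witnesses the robust sunflower threshold: every `ℓ`-uniform family of size at
least `N` (over any finite universe) contains a `(q, ε)`-robust sunflower. -/
def RBat (ℓ : ℕ) (q ε : ℝ) (N : ℕ) : Prop :=
  ∀ (U : Type) (_ : Fintype U) (_ : DecidableEq U) (𝒮 : Finset (Finset U)),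
    (∀ S ∈ 𝒮, S.card = ℓ) → N ≤ 𝒮.card →
    ∃ 𝒯 ⊆ 𝒮, 𝒯.Nonempty ∧ IsRobustSunflower 𝒯 q ε

/-- `RB ℓ q ε`: the smallest `N` such that every `ℓ`-uniform family of size at least `N`
contains a `(q, ε)`-robust sunflower (`⊤` if there is no such `N`). -/
noncomputable def RB (ℓ : ℕ) (q ε : ℝ) : ℕ∞ :=
  sInf {N : ℕ∞ | ∃ m : ℕ, N = m ∧ RBat ℓ q ε m}

/-- `N` witnesses the robust clique sunflower threshold: every `ℓ`-uniform family of
vertex sets of size at least `N` contains a `(p, ε)`-robust clique sunflower. -/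
def RCBat (ℓ : ℕ) (p ε : ℝ) (N : ℕ) : Prop :=
  ∀ (n : ℕ) (𝒮 : Finset (Finset (Fin n))),
    (∀ S ∈ 𝒮, S.card = ℓ) → N ≤ 𝒮.card →
    ∃ 𝒯 ⊆ 𝒮, 𝒯.Nonempty ∧ IsRobustCliqueSunflower 𝒯 p ε

/-- `RCB ℓ p ε`: the smallest `N` such that every `ℓ`-uniform family of size at least `N`
contains a `(p, ε)`-robust clique sunflower (`⊤` if there is no such `N`). -/
noncomputable def RCB (ℓ : ℕ) (p ε : ℝ) : ℕ∞ :=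
  sInf {N : ℕ∞ | ∃ m : ℕ, N = m ∧ RCBat ℓ p ε m}

/-- `𝒯` is a sunflower: all pairwise intersections of distinct members equal the core. -/
def IsSunflower {U : Type*} [Fintype U] [DecidableEq U] (𝒯 : Finset (Finset U)) : Prop :=
  ∀ S₁ ∈ 𝒯, ∀ S₂ ∈ 𝒯, S₁ ≠ S₂ → S₁ ∩ S₂ = core 𝒯

/-- `N` witnesses the sunflower threshold: every `ℓ`-uniform family of size at least `N`
contains a `k`-sunflower. -/
def SFat (ℓ k N : ℕ) : Prop :=
  ∀ (U : Type) (_ : Fintype U) (_ : DecidableEq U) (𝒮 : Finset (Finset U)),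
    (∀ S ∈ 𝒮, S.card = ℓ) → N ≤ 𝒮.card →
    ∃ 𝒯 ⊆ 𝒮, 𝒯.card = k ∧ IsSunflower 𝒯

/-- `SF ℓ k`: the smallest `N` such that every `ℓ`-uniform family of size at least `N`
contains a `k`-sunflower (`⊤` if there is no such `N`). -/
noncomputable def SF (ℓ k : ℕ) : ℕ∞ :=
  sInf {N : ℕ∞ | ∃ m : ℕ, N = m ∧ SFat ℓ k m}

open scoped Classical


noncomputable def wgt (p : ℝ) (b : Bool) : ℝ≥0∞ :=
  if b then ENNReal.ofReal p else ENNReal.ofReal (1 - p)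

noncomputable def Zm (U : Type*) [Fintype U] [DecidableEq U] (p : ℝ)
    (Q : (U → Bool) → Prop) : ℝ≥0∞ :=
  ∑ f : U → Bool, if Q f then (∏ u, wgt p (f u)) else 0


section Aux

variable {U : Type*} [Fintype U] [DecidableEq U] {p : ℝ}


lemma randFun_eq_Zm (A : Set (U → Bool)) : randFun U p A = Zm U p (· ∈ A) := by
  unfold randFun Zm
  rw [Measure.finset_sum_apply]
  refine Finset.sum_congr rfl fun f _ => ?_
  rw [Measure.smul_apply, Measure.dirac_apply, smul_eq_mul, Set.indicator]
  by_cases h : f ∈ A <;> simp [h, wgt]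

lemma Zm_congr {Q R : (U → Bool) → Prop} (h : ∀ f, Q f ↔ R f) : Zm U p Q = Zm U p R := by
  unfold Zm; exact Finset.sum_congr rfl fun f _ => by rw [if_congr (h f) rfl rfl]

lemma Zm_total (hp0 : 0 ≤ p) (hp1 : p ≤ 1) : Zm U p (fun _ => True) = 1 := by
  unfold Zm
  simp only [if_true]
  rw [← Fintype.piFinset_univ, ← Finset.prod_univ_sum]
  have key : wgt p true + wgt p false = 1 := by
    show ENNReal.ofReal p + ENNReal.ofReal (1 - p) = 1
    rw [← ENNReal.ofReal_add hp0 (by linarith), add_sub_cancel, ENNReal.ofReal_one]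
  simp [Fintype.sum_bool, key]


lemma Zm_add_compl (Q : (U → Bool) → Prop) :
    Zm U p Q + Zm U p (fun f => ¬ Q f) = Zm U p (fun _ => True) := by
  unfold Zm
  rw [← Finset.sum_add_distrib]
  refine Finset.sum_congr rfl fun f _ => ?_
  by_cases h : Q f <;> simp [h]


lemma Zm_compl (hp0 : 0 ≤ p) (hp1 : p ≤ 1) (Q : (U → Bool) → Prop) :
    Zm U p (fun f => ¬ Q f) = 1 - Zm U p Q := by
  have h := Zm_add_compl (p := p) Q
  rw [Zm_total hp0 hp1] at h
  have hle : Zm U p Q ≤ 1 := le_trans (le_add_of_nonneg_right zero_le) h.le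
  rw [add_comm] at h
  exact ENNReal.eq_sub_of_add_eq (hle.trans_lt ENNReal.one_lt_top).ne h


lemma Zm_allTrue (hp0 : 0 ≤ p) (hp1 : p ≤ 1) (T : Finset U) :
    Zm U p (fun f => ∀ x ∈ T, f x = true) = ENNReal.ofReal p ^ T.card := by
  have hset : (Finset.univ : Finset (U → Bool)).filter (fun f => ∀ x ∈ T, f x = true)
      = Fintype.piFinset (fun u => if u ∈ T then ({true} : Finset Bool) else Finset.univ) := by
    ext f
    simp only [Finset.mem_filter, Finset.mem_univ, true_and, Fintype.mem_piFinset]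
    constructor
    · intro h u; by_cases hu : u ∈ T <;> simp [hu, h]
    · intro h x hx; have := h x; simpa [hx] using this
  have hstep : Zm U p (fun f => ∀ x ∈ T, f x = true)
      = ∑ f ∈ Finset.univ.filter (fun f : U → Bool => ∀ x ∈ T, f x = true), ∏ u, wgt p (f u) := by
    unfold Zm
    rw [Finset.sum_filter]
    exact Finset.sum_congr rfl fun f _ => by by_cases h : (∀ x ∈ T, f x = true) <;> simp [h]
  rw [hstep, hset, ← Finset.prod_univ_sum]
  have : ∀ u : U, (∑ b ∈ (if u ∈ T then ({true} : Finset Bool) else Finset.univ), wgt p b)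
      = if u ∈ T then ENNReal.ofReal p else 1 := by
    intro u
    by_cases hu : u ∈ T
    · simp [hu, wgt]
    · simp only [hu, if_false]
      rw [Fintype.sum_bool]
      show ENNReal.ofReal p + ENNReal.ofReal (1 - p) = 1
      rw [← ENNReal.ofReal_add hp0 (by linarith), add_sub_cancel, ENNReal.ofReal_one]
  rw [Finset.prod_congr rfl fun u _ => this u, Finset.prod_ite_mem, Finset.univ_inter,
    Finset.prod_const]


lemma Zm_indep (hp0 : 0 ≤ p) (hp1 : p ≤ 1) (A : Finset U) (Q R : (U → Bool) → Prop)
    (hQ : ∀ f g : U → Bool, (∀ x ∈ A, f x = g x) → Q f → Q g)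
    (hR : ∀ f g : U → Bool, (∀ x ∉ A, f x = g x) → R f → R g) :
    Zm U p (fun f => Q f ∧ R f) = Zm U p Q * Zm U p R := by
  have hW : ∀ f g : U → Bool,
      (∏ u, wgt p (f u)) * (∏ u, wgt p (g u))
      = (∏ u, wgt p (if u ∈ A then f u else g u)) * (∏ u, wgt p (if u ∈ A then g u else f u)) := by
    intro f g
    rw [← Finset.prod_mul_distrib, ← Finset.prod_mul_distrib]
    refine Finset.prod_congr rfl fun u _ => ?_
    by_cases hu : u ∈ A <;> simp [hu, mul_comm]
  have key : Zm U p (fun f => Q f ∧ R f) * Zm U p (fun _ => True) = Zm U p Q * Zm U p R := by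
    unfold Zm
    rw [Finset.sum_mul_sum, Finset.sum_mul_sum]
    rw [← Fintype.sum_prod_type', ← Fintype.sum_prod_type']
    set φ : ((U → Bool) × (U → Bool)) → ((U → Bool) × (U → Bool)) := fun fg =>
      (fun x => if x ∈ A then fg.1 x else fg.2 x, fun x => if x ∈ A then fg.2 x else fg.1 x)
      with hφ
    have hφφ : ∀ fg, φ (φ fg) = fg := by
      intro fg
      ext x <;> by_cases hx : x ∈ A <;> simp [φ, hx]
    refine Fintype.sum_equiv ⟨φ, φ, hφφ, hφφ⟩ _ _ fun fg => ?_
    obtain ⟨f, g⟩ := fg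
    have h1 : ∀ x ∈ A, f x = (φ (f, g)).1 x := fun x hx => by simp [φ, hx]
    have h2 : ∀ x ∉ A, f x = (φ (f, g)).2 x := fun x hx => by simp [φ, hx]
    have hQiff : Q f ↔ Q (φ (f, g)).1 :=
      ⟨hQ f _ h1, hQ _ f fun x hx => (h1 x hx).symm⟩
    have hRiff : R f ↔ R (φ (f, g)).2 :=
      ⟨hR f _ h2, hR _ f fun x hx => (h2 x hx).symm⟩
    simp only [Equiv.coe_fn_mk]
    by_cases hq : Q f <;> by_cases hr : R f
    · rw [if_pos ⟨hq, hr⟩, if_pos trivial, if_pos (hQiff.mp hq), if_pos (hRiff.mp hr)]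
      exact hW f g
    · rw [if_neg (fun h => hr h.2), if_neg (fun h => hr (hRiff.mpr h))]
      simp
    · rw [if_neg (fun h => hq h.1), if_neg (fun h => hq (hQiff.mpr h))]
      simp
    · rw [if_neg (fun h => hq h.1), if_neg (fun h => hq (hQiff.mpr h))]
      simp
  rw [Zm_total hp0 hp1, mul_one] at key
  exact key


lemma Zm_someFalse (hp0 : 0 ≤ p) (hp1 : p ≤ 1) (T : Finset U) :
    Zm U p (fun f => ∃ x ∈ T, f x = false) = 1 - ENNReal.ofReal p ^ T.card := by
  rw [← Zm_allTrue hp0 hp1 T, ← Zm_compl hp0 hp1]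
  exact Zm_congr fun f => by simp


lemma Zm_prod {ι : Type*} (hp0 : 0 ≤ p) (hp1 : p ≤ 1) (𝒯 : Finset ι) (𝒜 : ι → Finset U)
    (hd : ∀ i ∈ 𝒯, ∀ j ∈ 𝒯, i ≠ j → Disjoint (𝒜 i) (𝒜 j)) :
    Zm U p (fun f => ∀ i ∈ 𝒯, ∃ x ∈ 𝒜 i, f x = false)
      = ∏ i ∈ 𝒯, (1 - ENNReal.ofReal p ^ (𝒜 i).card) := by
  induction 𝒯 using Finset.induction_on with
  | empty =>
    rw [Finset.prod_empty, Zm_congr (R := fun _ => True) fun f => by simp]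
    exact Zm_total hp0 hp1
  | @insert a s ha ih =>
    have hstep : Zm U p (fun f => ∀ i ∈ insert a s, ∃ x ∈ 𝒜 i, f x = false)
        = Zm U p (fun f => (∃ x ∈ 𝒜 a, f x = false) ∧ ∀ i ∈ s, ∃ x ∈ 𝒜 i, f x = false) :=
      Zm_congr fun f => by simp [Finset.forall_mem_insert]
    rw [hstep, Zm_indep hp0 hp1 (𝒜 a)]
    · rw [Zm_someFalse hp0 hp1, Finset.prod_insert ha,
        ih fun i hi j hj hij => hd i (Finset.mem_insert_of_mem hi) j (Finset.mem_insert_of_mem hj) hij]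
    · rintro f g hfg ⟨x, hx, hfx⟩
      exact ⟨x, hx, (hfg x hx) ▸ hfx⟩
    · intro f g hfg h i hi
      obtain ⟨x, hx, hfx⟩ := h i hi
      have hxa : x ∉ 𝒜 a := by
        have hne : a ≠ i := fun h' => ha (h' ▸ hi)
        exact fun hxA => (hd a (Finset.mem_insert_self a s) i (Finset.mem_insert_of_mem hi) hne).forall_ne_finset hxA hx rfl
      exact ⟨x, hx, (hfg x hxa) ▸ hfx⟩


end Aux


lemma mem_cliqueEdges {n : ℕ} {S : Finset (Fin n)} {e : Sym2 (Fin n)} :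
    e ∈ cliqueEdges S ↔ ∃ a b : Fin n, a ∈ S ∧ b ∈ S ∧ a ≠ b ∧ e = s(a, b) := by
  simp only [cliqueEdges, Finset.mem_image, Finset.mem_filter, Finset.mem_product]
  constructor
  · rintro ⟨⟨a, b⟩, ⟨⟨ha, hb⟩, hab⟩, rfl⟩
    exact ⟨a, b, ha, hb, hab, rfl⟩
  · rintro ⟨a, b, ha, hb, hab, rfl⟩
    exact ⟨(a, b), ⟨⟨ha, hb⟩, hab⟩, rfl⟩


lemma cliqueEdges_card_le {n : ℕ} (S : Finset (Fin n)) :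
    (cliqueEdges S).card ≤ S.card.choose 2 := by
  have h2 : 2 * (cliqueEdges S).card ≤ ((S ×ˢ S).filter fun q => q.1 ≠ q.2).card := by
    apply Finset.mul_card_image_le_card_of_maps_to (fun q hq => Finset.mem_image_of_mem _ hq)
    intro e he
    obtain ⟨a, b, ha, hb, hab, rfl⟩ := mem_cliqueEdges.mp he
    have h1 : (a, b) ∈ ((S ×ˢ S).filter fun q => q.1 ≠ q.2).filter fun q => s(q.1, q.2) = s(a, b) := by
      simp [Finset.mem_filter, Finset.mem_product, ha, hb, hab]
    have hsw : (b, a) ∈ ((S ×ˢ S).filter fun q => q.1 ≠ q.2).filter fun q => s(q.1, q.2) = s(a, b) := by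
      simp [Finset.mem_filter, Finset.mem_product, ha, hb, hab, Ne.symm hab, Sym2.eq_swap]
    exact Finset.one_lt_card.mpr ⟨(a, b), h1, (b, a), hsw, by simp [hab]⟩
  have hoff : ((S ×ˢ S).filter fun q => q.1 ≠ q.2).card = S.card * (S.card - 1) := by
    have : ((S ×ˢ S).filter fun q => q.1 ≠ q.2) = S.offDiag := by
      ext q; simp [Finset.mem_offDiag, and_assoc]
    rw [this, Finset.offDiag_card, ← Nat.sub_one_mul, mul_comm]
  rw [Nat.choose_two_right]
  omega


lemma cliqueEdges_disjoint {n : ℕ} {𝒯 : Finset (Finset (Fin n))} (hsun : IsSunflower 𝒯)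
    {S₁ S₂ : Finset (Fin n)} (h1 : S₁ ∈ 𝒯) (h2 : S₂ ∈ 𝒯) (hne : S₁ ≠ S₂) :
    Disjoint (cliqueEdges S₁ \ cliqueEdges (core 𝒯)) (cliqueEdges S₂ \ cliqueEdges (core 𝒯)) := by
  rw [Finset.disjoint_left]
  rintro e he1 he2
  rw [Finset.mem_sdiff] at he1 he2
  obtain ⟨a, b, ha, hb, hab, rfl⟩ := mem_cliqueEdges.mp he1.1
  obtain ⟨a', b', ha', hb', hab', heq⟩ := mem_cliqueEdges.mp he2.1
  have hmem : a ∈ S₂ ∧ b ∈ S₂ := by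
    rcases Sym2.eq_iff.mp heq with ⟨rfl, rfl⟩ | ⟨rfl, rfl⟩
    · exact ⟨ha', hb'⟩
    · exact ⟨hb', ha'⟩
  have hacore : a ∈ core 𝒯 := by
    rw [← hsun S₁ h1 S₂ h2 hne]; exact Finset.mem_inter.mpr ⟨ha, hmem.1⟩
  have hbcore : b ∈ core 𝒯 := by
    rw [← hsun S₁ h1 S₂ h2 hne]; exact Finset.mem_inter.mpr ⟨hb, hmem.2⟩
  exact he1.2 (mem_cliqueEdges.mpr ⟨a, b, hacore, hbcore, hab, rfl⟩)


lemma sunflower_is_rcs {n ℓ : ℕ} {p ε : ℝ} (hp0 : 0 < p) (hp1 : p < 1) (hε0 : 0 < ε)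
    (𝒯 : Finset (Finset (Fin n))) (hunif : ∀ S ∈ 𝒯, S.card = ℓ) (hsun : IsSunflower 𝒯)
    (hεk : Real.exp (-((𝒯.card : ℝ) * p ^ ℓ.choose 2)) ≤ ε) :
    IsRobustCliqueSunflower 𝒯 p ε := by
  set B := ℓ.choose 2 with hB
  set A : Finset (Fin n) → Finset (Sym2 (Fin n)) :=
    fun S => cliqueEdges S \ cliqueEdges (core 𝒯) with hA
  unfold IsRobustCliqueSunflower
  rw [randFun_eq_Zm]
  have hgood : Zm (Sym2 (Fin n)) p
      (· ∈ {G | ∃ S ∈ 𝒯, ∀ e ∈ cliqueEdges S, e ∈ cliqueEdges (core 𝒯) ∨ G e = true})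
      = Zm (Sym2 (Fin n)) p (fun G => ¬ ∀ S ∈ 𝒯, ∃ e ∈ A S, G e = false) := by
    refine Zm_congr fun G => ?_
    simp only [Set.mem_setOf_eq]
    constructor
    · rintro ⟨S, hS, h⟩ hcon
      obtain ⟨e, he, hfe⟩ := hcon S hS
      rw [hA, Finset.mem_sdiff] at he
      rcases h e he.1 with hc | ht
      · exact he.2 hc
      · rw [ht] at hfe; exact Bool.true_eq_false ▸ hfe
    · intro h
      by_contra hno
      push_neg at hno
      apply h
      intro S hS
      obtain ⟨e, he, hnC, hnT⟩ := hno S hS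
      exact ⟨e, Finset.mem_sdiff.mpr ⟨he, hnC⟩, by revert hnT; cases G e <;> simp⟩
  rw [hgood, Zm_compl hp0.le hp1.le]
  have hbad : Zm (Sym2 (Fin n)) p (fun G => ∀ S ∈ 𝒯, ∃ e ∈ A S, G e = false)
      = ∏ S ∈ 𝒯, (1 - ENNReal.ofReal p ^ (A S).card) :=
    Zm_prod hp0.le hp1.le 𝒯 A fun S₁ h1 S₂ h2 hne => cliqueEdges_disjoint hsun h1 h2 hne
  have hpB0 : (0:ℝ) ≤ p ^ B := pow_nonneg hp0.le B
  have hpB1 : p ^ B ≤ 1 := pow_le_one₀ hp0.le hp1.le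
  have hfactor : ∀ S ∈ 𝒯, (1 - ENNReal.ofReal p ^ (A S).card)
      ≤ ENNReal.ofReal (1 - p ^ B) := by
    intro S hS
    have hcard : (A S).card ≤ B := by
      refine le_trans (Finset.card_le_card Finset.sdiff_subset) ?_
      rw [hB, ← hunif S hS]
      exact cliqueEdges_card_le S
    have hle : ENNReal.ofReal (p ^ B) ≤ ENNReal.ofReal p ^ (A S).card := by
      rw [← ENNReal.ofReal_pow hp0.le]
      exact ENNReal.ofReal_le_ofReal (pow_le_pow_of_le_one hp0.le hp1.le hcard)
    calc 1 - ENNReal.ofReal p ^ (A S).card ≤ 1 - ENNReal.ofReal (p ^ B) :=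
          tsub_le_tsub_left hle 1
      _ = ENNReal.ofReal (1 - p ^ B) := by
          rw [ENNReal.ofReal_sub _ hpB0, ENNReal.ofReal_one]
  have hreal : (1 - p ^ B) ^ 𝒯.card ≤ ε := by
    have h2 : 1 - p ^ B ≤ Real.exp (-(p ^ B)) := by
      have := Real.add_one_le_exp (-(p ^ B)); linarith
    calc (1 - p ^ B) ^ 𝒯.card ≤ Real.exp (-(p ^ B)) ^ 𝒯.card :=
          pow_le_pow_left₀ (by linarith) h2 𝒯.card
      _ = Real.exp (-((𝒯.card : ℝ) * p ^ B)) := by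
          rw [← Real.exp_nat_mul]; ring_nf
      _ ≤ ε := hεk
  have hZbad : Zm (Sym2 (Fin n)) p (fun G => ∀ S ∈ 𝒯, ∃ e ∈ A S, G e = false)
      ≤ ENNReal.ofReal ε := by
    rw [hbad]
    calc ∏ S ∈ 𝒯, (1 - ENNReal.ofReal p ^ (A S).card)
        ≤ ∏ _S ∈ 𝒯, ENNReal.ofReal (1 - p ^ B) := Finset.prod_le_prod' hfactor
      _ = ENNReal.ofReal (1 - p ^ B) ^ 𝒯.card := Finset.prod_const _
      _ = ENNReal.ofReal ((1 - p ^ B) ^ 𝒯.card) := by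
          rw [ENNReal.ofReal_pow (by linarith)]
      _ ≤ ENNReal.ofReal ε := ENNReal.ofReal_le_ofReal hreal
  calc ENNReal.ofReal (1 - ε) = 1 - ENNReal.ofReal ε := by
        rw [ENNReal.ofReal_sub _ hε0.le, ENNReal.ofReal_one]
    _ ≤ 1 - Zm (Sym2 (Fin n)) p (fun G => ∀ S ∈ 𝒯, ∃ e ∈ A S, G e = false) :=
        tsub_le_tsub_left hZbad 1

/-- Using the sunflower bound `S(ℓ,k) ≤ (ℓk)^ℓ` (and the fact that every `ℓ`-uniform
`k`-sunflower is a `(p, exp(-k·p^{binom(ℓ,2)}))`-robust clique sunflower), one obtains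
`RCB(ℓ, p, ε) ≤ (ℓ·⌈log(1/ε)·p^{-binom(ℓ,2)}⌉)^ℓ ≤ (1/p)^{ℓ³}·(ℓ·(1 + log(1/ε)))^ℓ`. -/
theorem stmt13 (hSF : ∀ ℓ k : ℕ, 1 ≤ ℓ → 1 ≤ k →
      (SF ℓ k : ℝ≥0∞) ≤ ENNReal.ofReal (((ℓ : ℝ) * k) ^ ℓ)) :
    ∀ (ℓ : ℕ) (p ε : ℝ), 1 ≤ ℓ → 0 < p → p < 1 → 0 < ε → ε < 1 →
      (RCB ℓ p ε : ℝ≥0∞) ≤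
          ENNReal.ofReal (((ℓ : ℝ) * ⌈Real.log (1 / ε) * (p ^ ℓ.choose 2)⁻¹⌉₊) ^ ℓ)
      ∧ ((ℓ : ℝ) * ⌈Real.log (1 / ε) * (p ^ ℓ.choose 2)⁻¹⌉₊) ^ ℓ ≤
          (1 / p) ^ (ℓ ^ 3) * ((ℓ : ℝ) * (1 + Real.log (1 / ε))) ^ ℓ := by
  intro ℓ p ε hℓ hp0 hp1 hε0 hε1
  set B := ℓ.choose 2 with hB
  set L := Real.log (1 / ε) with hL
  set k := ⌈L * (p ^ B)⁻¹⌉₊ with hk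
  have hpB0 : (0:ℝ) < p ^ B := pow_pos hp0 B
  have hpB1 : p ^ B ≤ 1 := pow_le_one₀ hp0.le hp1.le
  have hL0 : 0 < L := Real.log_pos (one_lt_one_div hε0 hε1)
  have hk1 : 1 ≤ k := Nat.ceil_pos.mpr (mul_pos hL0 (inv_pos.mpr hpB0))
  have hεk : Real.exp (-((k : ℝ) * p ^ B)) ≤ ε := by
    have h1 : L * (p ^ B)⁻¹ ≤ (k : ℝ) := Nat.le_ceil _
    have h2 : L ≤ (k : ℝ) * p ^ B := by
      have := mul_le_mul_of_nonneg_right h1 hpB0.le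
      rwa [mul_assoc, inv_mul_cancel₀ hpB0.ne', mul_one] at this
    have hLlog : L = -Real.log ε := by rw [hL, one_div, Real.log_inv]
    have h3 : -((k : ℝ) * p ^ B) ≤ Real.log ε := by
      rw [hLlog] at h2; linarith
    calc Real.exp (-((k : ℝ) * p ^ B)) ≤ Real.exp (Real.log ε) := Real.exp_le_exp.mpr h3
      _ = ε := Real.exp_log hε0
  have hSFk := hSF ℓ k hℓ hk1
  have hex : ∃ m : ℕ, SFat ℓ k m := by
    by_contra h
    push_neg at h
    have hempty : {N : ℕ∞ | ∃ m : ℕ, N = m ∧ SFat ℓ k m} = ∅ := by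
      ext N
      simp only [Set.mem_setOf_eq, Set.mem_empty_iff_false, iff_false]
      rintro ⟨m, rfl, hm⟩
      exact h m hm
    rw [SF, hempty, sInf_empty] at hSFk
    simp only [ENat.toENNReal_top] at hSFk
    exact ENNReal.ofReal_ne_top (top_le_iff.mp hSFk)
  set m₀ := Nat.find hex with hm₀def
  have hm₀ : SFat ℓ k m₀ := Nat.find_spec hex
  have hSFeq : SF ℓ k = (m₀ : ℕ∞) := by
    apply le_antisymm
    · exact sInf_le ⟨m₀, rfl, hm₀⟩
    · apply le_sInf
      rintro N ⟨m, rfl, hm⟩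
      exact_mod_cast Nat.find_min' hex hm
  have hm₀le : (m₀ : ℝ≥0∞) ≤ ENNReal.ofReal (((ℓ : ℝ) * k) ^ ℓ) := by
    rw [hSFeq] at hSFk
    rwa [ENat.toENNReal_coe] at hSFk
  have hRCB : RCBat ℓ p ε m₀ := by
    intro n 𝒮 hunif hcard
    obtain ⟨𝒯, hsub, hkcard, hsun⟩ := hm₀ (Fin n) _ _ 𝒮 hunif hcard
    have hunif' : ∀ S ∈ 𝒯, S.card = ℓ := fun S hS => hunif S (hsub hS)
    refine ⟨𝒯, hsub, Finset.card_pos.mp (by rw [hkcard]; exact hk1), ?_⟩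
    exact sunflower_is_rcs hp0 hp1 hε0 𝒯 hunif' hsun (by rw [hkcard]; exact hεk)
  have hRCBle : (RCB ℓ p ε : ℝ≥0∞) ≤ (m₀ : ℝ≥0∞) := by
    have h : RCB ℓ p ε ≤ (m₀ : ℕ∞) := sInf_le ⟨m₀, rfl, hRCB⟩
    calc (RCB ℓ p ε : ℝ≥0∞) ≤ ((m₀ : ℕ∞) : ℝ≥0∞) := ENat.toENNReal_le.mpr h
      _ = (m₀ : ℝ≥0∞) := ENat.toENNReal_coe m₀
  constructor
  · exact hRCBle.trans hm₀le
  · have hq1 : (1:ℝ) ≤ (p ^ B)⁻¹ := (one_le_inv₀ hpB0).mpr hpB1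
    have hll : (0:ℝ) ≤ (ℓ : ℝ) := Nat.cast_nonneg ℓ
    have hkle : (k : ℝ) ≤ (1 + L) * (p ^ B)⁻¹ := by
      have hc := (Nat.ceil_lt_add_one (mul_nonneg hL0.le (inv_nonneg.mpr hpB0.le))).le
      calc (k : ℝ) ≤ L * (p ^ B)⁻¹ + 1 := hc
        _ ≤ (1 + L) * (p ^ B)⁻¹ := by nlinarith
    have hstep : ((ℓ : ℝ) * k) ^ ℓ ≤ ((p ^ B)⁻¹ * ((ℓ : ℝ) * (1 + L))) ^ ℓ := by
      apply pow_le_pow_left₀ (mul_nonneg hll (Nat.cast_nonneg k))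
      calc (ℓ : ℝ) * k ≤ (ℓ : ℝ) * ((1 + L) * (p ^ B)⁻¹) :=
            mul_le_mul_of_nonneg_left hkle hll
        _ = (p ^ B)⁻¹ * ((ℓ : ℝ) * (1 + L)) := by ring
    have hBl : B * ℓ ≤ ℓ ^ 3 := by
      have h1 : B ≤ ℓ ^ 2 := by
        rw [hB, Nat.choose_two_right]
        calc ℓ * (ℓ - 1) / 2 ≤ ℓ * (ℓ - 1) := Nat.div_le_self _ _
          _ ≤ ℓ * ℓ := Nat.mul_le_mul_left _ (Nat.sub_le _ _)
          _ = ℓ ^ 2 := (sq ℓ).symm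
      calc B * ℓ ≤ ℓ ^ 2 * ℓ := Nat.mul_le_mul_right _ h1
        _ = ℓ ^ 3 := by ring
    have h1p : (1:ℝ) ≤ 1 / p := (one_le_div hp0).mpr hp1.le
    calc ((ℓ : ℝ) * k) ^ ℓ ≤ ((p ^ B)⁻¹ * ((ℓ : ℝ) * (1 + L))) ^ ℓ := hstep
      _ = ((p ^ B)⁻¹) ^ ℓ * ((ℓ : ℝ) * (1 + L)) ^ ℓ := mul_pow _ _ _
      _ ≤ (1 / p) ^ (ℓ ^ 3) * ((ℓ : ℝ) * (1 + L)) ^ ℓ := by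
          refine mul_le_mul_of_nonneg_right ?_
            (pow_nonneg (mul_nonneg hll (by linarith)) ℓ)
          have : ((p ^ B)⁻¹ : ℝ) = (1 / p) ^ B := by rw [one_div, inv_pow]
          rw [this, ← pow_mul]
          exact pow_le_pow_right₀ h1p hBl
      _ = (1 / p) ^ (ℓ ^ 3) * ((ℓ : ℝ) * (1 + Real.log (1 / ε))) ^ ℓ := by rw [hL]
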